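/- Let E be a vector lattice with the projection property and x, y ∈ E. The band B_{x≤y} := ((x−y)⁺)ᵈ is the largest band such that its band projection P satisfies P(x) ≤ P(y); that is, if B is any band whose projection P satisfies P(x) ≤ P(y), then B ⊆ B_{x≤y}. -/

import Mathlib

variable {E : Type*}

section Defs
variable [Lattice E] [AddCommGroup E] [CovariantClass E E (· + ·) (· ≤ ·)]

/-- The disjoint complement of a set. -/
def dComp (A : Set E) : Set E := {x | ∀ a ∈ A, |x| ⊓ |a| = 0}

/-- A band (in a space with the projection property) is a set equal to its double
disjoint complement. -/
def IsBand (B : Set E) : Prop := dComp (dComp B) = B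

/-- The band generated by an element. -/
def bandGen (u : E) : Set E := dComp (dComp ({u} : Set E))

/-- `P` is the band projection onto `B`: every `x` decomposes as `P x ∈ B` plus
`x - P x ∈ Bᵈ`. -/
def IsBandProjection (B : Set E) (P : E → E) : Prop :=
  (∀ x, P x ∈ B) ∧ (∀ x, x - P x ∈ dComp B)

/-- `u` is a weak order unit of the band `B`. -/
def IsWeakUnitOf (B : Set E) (u : E) : Prop :=
  u ∈ B ∧ 0 ≤ u ∧ ∀ z ∈ B, u ⊓ |z| = 0 → z = 0

/-- `u` is a weak order unit of `E`. -/
def IsWeakUnit (u : E) : Prop := 0 ≤ u ∧ ∀ z : E, u ⊓ |z| = 0 → z = 0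

end Defs

section Aux
variable [Lattice E] [AddCommGroup E] [CovariantClass E E (· + ·) (· ≤ ·)]

lemma aux_inf_add_le {a b w : E} (ha : 0 ≤ a) (hb : 0 ≤ b) (hw : 0 ≤ w) :
    (a + b) ⊓ w ≤ a ⊓ w + b ⊓ w := by
  rw [add_inf, inf_add, inf_add]
  refine le_inf (le_inf inf_le_left ?_) (le_inf ?_ ?_)
  · exact inf_le_right.trans (le_add_of_nonneg_right hb)
  · exact inf_le_right.trans (le_add_of_nonneg_left ha)
  · exact inf_le_right.trans (le_add_of_nonneg_left hw)

lemma aux_subset_ddComp (A : Set E) : A ⊆ dComp (dComp A) := by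
  intro x hx a ha
  rw [inf_comm]
  exact ha x hx

lemma aux_dComp_sub {A : Set E} {z₁ z₂ : E} (h₁ : z₁ ∈ dComp A) (h₂ : z₂ ∈ dComp A) :
    z₁ - z₂ ∈ dComp A := by
  intro a ha
  have habs : |z₁ - z₂| ≤ |z₁| + |z₂| := by
    rw [sub_eq_add_neg]
    exact (abs_add_le z₁ (-z₂)).trans (by rw [abs_neg])
  have h0 : (0 : E) ≤ |z₁ - z₂| ⊓ |a| := le_inf (abs_nonneg _) (abs_nonneg _)
  refine le_antisymm ?_ h0
  calc |z₁ - z₂| ⊓ |a| ≤ (|z₁| + |z₂|) ⊓ |a| :=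
        inf_le_inf_right _ habs
    _ ≤ |z₁| ⊓ |a| + |z₂| ⊓ |a| := aux_inf_add_le (abs_nonneg _) (abs_nonneg _) (abs_nonneg _)
    _ = 0 := by rw [h₁ a ha, h₂ a ha, add_zero]

end Aux

/-- `B_{x≤y}` is the largest band whose projection `P` satisfies
`P x ≤ P y`. -/
theorem stmt2 [Lattice E] [AddCommGroup E] [CovariantClass E E (· + ·) (· ≤ ·)]
    [Module ℝ E] [PosSMulMono ℝ E]
    (hpp : ∀ B : Set E, IsBand B → ∃ P : E → E, IsBandProjection B P)
    (x y : E) (B : Set E) (P : E → E)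
    (hB : IsBand B) (hP : IsBandProjection B P) (h : P x ≤ P y) :
    B ⊆ dComp (bandGen ((x - y) ⊔ 0)) := by
  set u : E := (x - y) ⊔ 0 with hu
  -- the disjoint part of x - y
  set d : E := (x - P x) - (y - P y) with hd
  have hdB : d ∈ dComp B := aux_dComp_sub (hP.2 x) (hP.2 y)
  -- the band part of x - y is P x - P y ≤ 0, so u ≤ |d|
  have hc : x - y = (P x - P y) + d := by rw [hd]; abel
  have hule : u ≤ |d| := by
    refine sup_le ?_ (abs_nonneg d)
    rw [hc]
    calc (P x - P y) + d ≤ 0 + d := by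
          exact add_le_add (sub_nonpos.mpr h) (le_refl d)
      _ = d := zero_add d
      _ ≤ |d| := le_abs_self d
  -- every b ∈ B is disjoint from u
  have key : B ⊆ dComp ({u} : Set E) := by
    intro b hb a ha
    rcases ha with rfl
    have hua : |u| = u := abs_of_nonneg le_sup_right
    rw [hua]
    have h0 : (0 : E) ≤ |b| ⊓ u := le_inf (abs_nonneg _) le_sup_right
    refine le_antisymm ?_ h0
    calc |b| ⊓ u ≤ |d| ⊓ |b| :=
          le_inf (inf_le_right.trans hule) inf_le_left
      _ = 0 := hdB b hb
  exact key.trans (aux_subset_ddComp _)
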